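/- Let A be an m×m real symmetric positive definite matrix with condition number κ̲ = λ_max(A)/λ_min(A), b ∈ ℝ^m, q(x) = ½xᵀAx − xᵀb with minimizer x* = A⁻¹b, and fix a partition of {1,…,m} with block projections π₁,…,π_{n̂}. Suppose (x^k)_{k≥0} is a sequence in ℝ^m such that for every k, the gradient blocks π_n(Ax^k − b) are all nonzero, and x^{k+1} = x^k + Σ_n θ^k_n π_n(Ax^k − b) where Θ^k = −H_k⁻¹D_k, with (D_k)_n = ⟨Ax^k − b, π_n(Ax^k − b)⟩ and (H_k)_{n,m'} = ⟨π_n(Ax^k − b), A π_{m'}(Ax^k − b)⟩. If there is K ≥ 1 with κ(H_k) ≤ K for all k, then ‖x^k − x*‖²_A ≤ (1 − 4κ̲/(K(κ̲+1)²))^k · ‖x^0 − x*‖²_A for all k, and consequently x^k converges to x*. -/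

import Mathlib

open Matrix

/-- The quadratic form `q(x) = ½ xᵀAx − xᵀb`. -/
noncomputable def quadForm {m : ℕ} (A : Matrix (Fin m) (Fin m) ℝ) (b x : Fin m → ℝ) : ℝ :=
  (1 / 2 : ℝ) * (x ⬝ᵥ A.mulVec x) - x ⬝ᵥ b

/-- Block projection associated with the partition of `Fin m` given by the fibers of
`P : Fin m → Fin nh`. -/
def blockProj {m nh : ℕ} (P : Fin m → Fin nh) (k : Fin nh) (x : Fin m → ℝ) : Fin m → ℝ :=
  fun i => if P i = k then x i else 0

/-- Spectral condition number `κ(M) = λ_max(M) / λ_min(M)` of a symmetric real matrix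
(junk value `0` if `M` is not symmetric). -/
noncomputable def condNumber {n : ℕ} (M : Matrix (Fin n) (Fin n) ℝ) : ℝ :=
  letI := Classical.propDecidable M.IsHermitian
  if h : M.IsHermitian then (⨆ i, h.eigenvalues i) / (⨅ i, h.eigenvalues i) else 0

section AuxLemmas

lemma dot_transpose {m n : ℕ} (M : Matrix (Fin m) (Fin n) ℝ) (v : Fin m → ℝ) (w : Fin n → ℝ) :
    (Mᵀ *ᵥ v) ⬝ᵥ w = v ⬝ᵥ (M *ᵥ w) := by
  rw [mulVec_transpose, ← dotProduct_mulVec]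

lemma sd_dot_pos {m : ℕ} {A : Matrix (Fin m) (Fin m) ℝ} (hA : A.PosDef) {y : Fin m → ℝ}
    (hy : y ≠ 0) : 0 < y ⬝ᵥ A.mulVec y := by
  simpa using hA.re_dotProduct_pos hy

lemma sd_dot_nonneg {m : ℕ} {A : Matrix (Fin m) (Fin m) ℝ} (hA : A.PosDef) (y : Fin m → ℝ) :
    0 ≤ y ⬝ᵥ A.mulVec y := by
  simpa using hA.posSemidef.re_dotProduct_nonneg y

lemma transpose_of_hermitian {m : ℕ} {A : Matrix (Fin m) (Fin m) ℝ} (hA : A.IsHermitian) :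
    Aᵀ = A := by
  ext i j
  have h := congrFun (congrFun hA i) j
  simpa [conjTranspose_apply] using h

lemma dot_mulVec_symm {m : ℕ} {A : Matrix (Fin m) (Fin m) ℝ} (hs : Aᵀ = A)
    (v w : Fin m → ℝ) : v ⬝ᵥ A *ᵥ w = w ⬝ᵥ A *ᵥ v := by
  rw [← dot_transpose A w v, hs, dotProduct_comm]

lemma sum_dot {m : ℕ} {ι : Type*} (s : Finset ι) (f : ι → Fin m → ℝ) (w : Fin m → ℝ) :
    (∑ n ∈ s, f n) ⬝ᵥ w = ∑ n ∈ s, f n ⬝ᵥ w := by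
  simp only [dotProduct, Finset.sum_apply, Finset.sum_mul]
  exact Finset.sum_comm

lemma dot_sum {m : ℕ} {ι : Type*} (s : Finset ι) (w : Fin m → ℝ) (f : ι → Fin m → ℝ) :
    w ⬝ᵥ (∑ n ∈ s, f n) = ∑ n ∈ s, w ⬝ᵥ f n := by
  rw [dotProduct_comm, sum_dot]
  exact Finset.sum_congr rfl fun n _ => dotProduct_comm _ _

lemma mulVec_sum' {m : ℕ} {ι : Type*} (s : Finset ι) (A : Matrix (Fin m) (Fin m) ℝ)
    (f : ι → Fin m → ℝ) : A *ᵥ (∑ n ∈ s, f n) = ∑ n ∈ s, A *ᵥ f n := by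
  have h := map_sum (Matrix.mulVecLin A) f s
  simp only [Matrix.mulVecLin_apply] at h
  exact h

lemma spectral_decomp {m : ℕ} {A : Matrix (Fin m) (Fin m) ℝ} (hA : A.PosDef) (y : Fin m → ℝ) :
    ∃ c : Fin m → ℝ,
      y ⬝ᵥ y = ∑ i, c i ^ 2 ∧
      y ⬝ᵥ A.mulVec y = ∑ i, hA.1.eigenvalues i * c i ^ 2 ∧
      y ⬝ᵥ A⁻¹.mulVec y = ∑ i, (hA.1.eigenvalues i)⁻¹ * c i ^ 2 := by
  classical
  set U : Matrix (Fin m) (Fin m) ℝ := (hA.1.eigenvectorUnitary : Matrix (Fin m) (Fin m) ℝ) with hU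
  set ev : Fin m → ℝ := hA.1.eigenvalues with hev
  have hevpos : ∀ i, 0 < ev i := fun i => hA.eigenvalues_pos i
  have hstar : star U = Uᵀ := by
    ext i j; simp [Matrix.star_eq_conjTranspose, conjTranspose_apply]
  have hUU : U * Uᵀ = 1 := by
    rw [← hstar]; exact (Matrix.mem_unitaryGroup_iff).mp hA.1.eigenvectorUnitary.2
  have hUU' : Uᵀ * U = 1 := by
    rw [← hstar]; exact (Matrix.mem_unitaryGroup_iff').mp hA.1.eigenvectorUnitary.2
  have hspec : A = U * diagonal ev * Uᵀ := by
    rw [← hstar]; simpa using hA.1.spectral_theorem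
  refine ⟨Uᵀ *ᵥ y, ?_, ?_, ?_⟩
  · have h2 : (Uᵀ *ᵥ y) ⬝ᵥ (Uᵀ *ᵥ y) = y ⬝ᵥ y := by
      rw [dot_transpose, mulVec_mulVec, hUU, one_mulVec]
    rw [← h2]
    simp only [dotProduct, pow_two]
  · have h1 : y ⬝ᵥ A.mulVec y = (Uᵀ *ᵥ y) ⬝ᵥ (diagonal ev *ᵥ (Uᵀ *ᵥ y)) := by
      conv_lhs => rw [hspec]
      rw [← mulVec_mulVec, ← mulVec_mulVec, ← dot_transpose U]
    rw [h1]
    simp only [dotProduct, mulVec_diagonal]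
    exact Finset.sum_congr rfl fun i _ => by ring
  · have hinv : A⁻¹ = U * diagonal (fun i => (ev i)⁻¹) * Uᵀ := by
      apply Matrix.inv_eq_right_inv
      rw [hspec]
      calc U * diagonal ev * Uᵀ * (U * diagonal (fun i => (ev i)⁻¹) * Uᵀ)
          = U * diagonal ev * (Uᵀ * U) * diagonal (fun i => (ev i)⁻¹) * Uᵀ := by
            noncomm_ring
        _ = U * (diagonal ev * diagonal (fun i => (ev i)⁻¹)) * Uᵀ := by
            rw [hUU']; noncomm_ring
        _ = 1 := by
            rw [diagonal_mul_diagonal]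
            have h3 : (fun i => ev i * (ev i)⁻¹) = fun _ => (1:ℝ) := by
              funext i; exact mul_inv_cancel₀ (ne_of_gt (hevpos i))
            rw [h3, diagonal_one, mul_one, hUU]
    have h1 : y ⬝ᵥ A⁻¹.mulVec y = (Uᵀ *ᵥ y) ⬝ᵥ (diagonal (fun i => (ev i)⁻¹) *ᵥ (Uᵀ *ᵥ y)) := by
      conv_lhs => rw [hinv]
      rw [← mulVec_mulVec, ← mulVec_mulVec, ← dot_transpose U]
    rw [h1]
    simp only [dotProduct, mulVec_diagonal]
    exact Finset.sum_congr rfl fun i _ => by ring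

lemma kantorovich_sum {m : ℕ} (a b : ℝ) (ha : 0 < a) (hab : a ≤ b)
    (lam : Fin m → ℝ) (hlo : ∀ i, a ≤ lam i) (hhi : ∀ i, lam i ≤ b) (c : Fin m → ℝ) :
    4 * a * b * ((∑ i, lam i * c i ^ 2) * (∑ i, (lam i)⁻¹ * c i ^ 2))
      ≤ (a + b) ^ 2 * (∑ i, c i ^ 2) ^ 2 := by
  have hpos : ∀ i, 0 < lam i := fun i => lt_of_lt_of_le ha (hlo i)
  set S1 := ∑ i, lam i * c i ^ 2 with hS1
  set S2 := ∑ i, (lam i)⁻¹ * c i ^ 2 with hS2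
  set S0 := ∑ i, c i ^ 2 with hS0
  have hS1nn : 0 ≤ S1 := Finset.sum_nonneg fun i _ =>
    mul_nonneg (le_of_lt (hpos i)) (sq_nonneg _)
  have hS2nn : 0 ≤ S2 := Finset.sum_nonneg fun i _ =>
    mul_nonneg (inv_nonneg.mpr (le_of_lt (hpos i))) (sq_nonneg _)
  have key : S1 + a * b * S2 ≤ (a + b) * S0 := by
    rw [hS1, hS2, hS0, Finset.mul_sum, Finset.mul_sum, ← Finset.sum_add_distrib]
    apply Finset.sum_le_sum
    intro i _
    have h1 : lam i + a * b * (lam i)⁻¹ ≤ a + b := by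
      have h2 : (lam i - a) * (b - lam i) ≥ 0 :=
        mul_nonneg (by linarith [hlo i]) (by linarith [hhi i])
      have h3 : lam i * lam i + a * b ≤ (a + b) * lam i := by nlinarith
      have h4 : (lam i * lam i + a * b) / lam i ≤ a + b := by
        rw [div_le_iff₀ (hpos i)]; linarith
      calc lam i + a * b * (lam i)⁻¹ = (lam i * lam i + a * b) / lam i := by
            rw [eq_div_iff (ne_of_gt (hpos i))]
            have h5 : (lam i)⁻¹ * lam i = 1 := inv_mul_cancel₀ (ne_of_gt (hpos i))
            linear_combination a * b * h5
        _ ≤ a + b := h4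
    calc lam i * c i ^ 2 + a * b * ((lam i)⁻¹ * c i ^ 2)
        = (lam i + a * b * (lam i)⁻¹) * c i ^ 2 := by ring
      _ ≤ (a + b) * c i ^ 2 := mul_le_mul_of_nonneg_right h1 (sq_nonneg _)
  have amgm : 4 * (S1 * (a * b * S2)) ≤ (S1 + a * b * S2) ^ 2 := by
    nlinarith [sq_nonneg (S1 - a * b * S2)]
  have habS2 : 0 ≤ a * b * S2 :=
    mul_nonneg (mul_nonneg (le_of_lt ha) (le_of_lt (lt_of_lt_of_le ha hab))) hS2nn
  have hsum_nn : 0 ≤ S1 + a * b * S2 := by linarith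
  have sq_le : (S1 + a * b * S2) ^ 2 ≤ ((a + b) * S0) ^ 2 := pow_le_pow_left₀ hsum_nn key 2
  calc 4 * a * b * (S1 * S2) = 4 * (S1 * (a * b * S2)) := by ring
    _ ≤ (S1 + a * b * S2) ^ 2 := amgm
    _ ≤ ((a + b) * S0) ^ 2 := sq_le
    _ = (a + b) ^ 2 * S0 ^ 2 := by ring

lemma kantorovich_matrix {m : ℕ} {A : Matrix (Fin m) (Fin m) ℝ} (hA : A.PosDef)
    (a b : ℝ) (ha : 0 < a) (hab : a ≤ b)
    (hlo : ∀ i, a ≤ hA.1.eigenvalues i) (hhi : ∀ i, hA.1.eigenvalues i ≤ b) (y : Fin m → ℝ) :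
    4 * a * b * ((y ⬝ᵥ A.mulVec y) * (y ⬝ᵥ A⁻¹.mulVec y)) ≤ (a + b) ^ 2 * (y ⬝ᵥ y) ^ 2 := by
  obtain ⟨c, h0, h1, h2⟩ := spectral_decomp hA y
  rw [h0, h1, h2]
  exact kantorovich_sum a b ha hab _ hlo hhi c

lemma quad_lower {m : ℕ} {A : Matrix (Fin m) (Fin m) ℝ} (hA : A.PosDef) (a : ℝ)
    (hlo : ∀ i, a ≤ hA.1.eigenvalues i) (y : Fin m → ℝ) :
    a * (y ⬝ᵥ y) ≤ y ⬝ᵥ A.mulVec y := by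
  obtain ⟨c, h0, h1, _⟩ := spectral_decomp hA y
  rw [h0, h1, Finset.mul_sum]
  exact Finset.sum_le_sum fun i _ => mul_le_mul_of_nonneg_right (hlo i) (sq_nonneg _)

lemma condNumber_posdef {n : ℕ} (hn : 0 < n) {M : Matrix (Fin n) (Fin n) ℝ} (hM : M.PosDef) :
    0 < (⨅ i, hM.1.eigenvalues i) ∧
    (⨅ i, hM.1.eigenvalues i) ≤ (⨆ i, hM.1.eigenvalues i) ∧
    (∀ i, (⨅ j, hM.1.eigenvalues j) ≤ hM.1.eigenvalues i ∧
        hM.1.eigenvalues i ≤ (⨆ j, hM.1.eigenvalues j)) ∧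
    condNumber M = (⨆ i, hM.1.eigenvalues i) / (⨅ i, hM.1.eigenvalues i) := by
  haveI : Nonempty (Fin n) := Fin.pos_iff_nonempty.mp hn
  set f : Fin n → ℝ := hM.1.eigenvalues with hf
  have hbb : BddBelow (Set.range f) := (Set.finite_range f).bddBelow
  have hba : BddAbove (Set.range f) := (Set.finite_range f).bddAbove
  have hle : ∀ i, (⨅ j, f j) ≤ f i := fun i => ciInf_le hbb i
  have hge : ∀ i, f i ≤ ⨆ j, f j := fun i => le_ciSup hba i
  have hmem : (⨅ j, f j) ∈ Set.range f := by
    rw [iInf]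
    exact (Set.range_nonempty f).csInf_mem (Set.finite_range f)
  obtain ⟨i0, hi0⟩ := hmem
  have hpos : 0 < ⨅ j, f j := hi0 ▸ hM.eigenvalues_pos i0
  have hcond : condNumber M = (⨆ i, f i) / (⨅ i, f i) := by
    have h : condNumber M =
        (letI := Classical.propDecidable M.IsHermitian
         if h : M.IsHermitian then (⨆ i, h.eigenvalues i) / (⨅ i, h.eigenvalues i) else 0) := rfl
    rw [h, dif_pos hM.1]
  exact ⟨hpos, le_trans (hle i0) (hge i0), fun i => ⟨hle i, hge i⟩, hcond⟩

end AuxLemmas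

/-- Linear convergence of the enhanced steepest-descent iterates: if `κ(H_k) ≤ K` for all
`k`, then `‖x^k − x*‖²_A ≤ (1 − 4κ̲/(K(κ̲+1)²))^k ‖x⁰ − x*‖²_A` and `x^k → x*`. -/
theorem stmt_9 {m nh : ℕ} (A : Matrix (Fin m) (Fin m) ℝ) (hA : A.PosDef)
    (b : Fin m → ℝ) (xstar : Fin m → ℝ) (hxstar : xstar = A⁻¹.mulVec b)
    (P : Fin m → Fin nh) (hP : Function.Surjective P)
    (x : ℕ → Fin m → ℝ)
    (g : ℕ → Fin m → ℝ) (hg : ∀ k, g k = A.mulVec (x k) - b)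
    (hnz : ∀ k n, blockProj P n (g k) ≠ 0)
    (D : ℕ → Fin nh → ℝ) (hD : ∀ k n, D k n = g k ⬝ᵥ blockProj P n (g k))
    (H : ℕ → Matrix (Fin nh) (Fin nh) ℝ)
    (hH : ∀ k n m', H k n m' = blockProj P n (g k) ⬝ᵥ A.mulVec (blockProj P m' (g k)))
    (Θ : ℕ → Fin nh → ℝ) (hΘ : ∀ k, Θ k = -((H k)⁻¹.mulVec (D k)))
    (hupd : ∀ k, x (k + 1) = x k + ∑ n, Θ k n • blockProj P n (g k))
    (K : ℝ) (hK : 1 ≤ K) (hcond : ∀ k, condNumber (H k) ≤ K) :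
    (∀ k : ℕ,
        (x k - xstar) ⬝ᵥ A.mulVec (x k - xstar)
          ≤ (1 - 4 * condNumber A / (K * (condNumber A + 1) ^ 2)) ^ k
              * ((x 0 - xstar) ⬝ᵥ A.mulVec (x 0 - xstar)))
      ∧ Filter.Tendsto x Filter.atTop (nhds xstar) := by
  classical
  rcases Nat.eq_zero_or_pos m with hm | hm
  · subst hm
    have hx : ∀ k, x k = xstar := fun k => funext fun i => Fin.elim0 i
    constructor
    · intro k
      have hdot : ∀ u v : Fin 0 → ℝ, u ⬝ᵥ v = 0 := fun u v => by
        simp [dotProduct]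
      rw [hdot, hdot, mul_zero]
    · have hxx : x = fun _ => xstar := funext hx
      rw [hxx]
      exact tendsto_const_nhds
  -- main case
  haveI : Nonempty (Fin m) := Fin.pos_iff_nonempty.mp hm
  haveI : Nonempty (Fin nh) := ⟨P (Classical.arbitrary (Fin m))⟩
  obtain ⟨hapos, haleb, hbounds, hcondA⟩ := condNumber_posdef hm hA
  set a : ℝ := ⨅ i, hA.1.eigenvalues i with hadef
  set bb : ℝ := ⨆ i, hA.1.eigenvalues i with hbdef
  have hbpos : 0 < bb := lt_of_lt_of_le hapos haleb
  have habpos : 0 < a + bb := by linarith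
  have hK0 : (0:ℝ) < K := lt_of_lt_of_le one_pos hK
  have hκpos : 0 < condNumber A := by rw [hcondA]; positivity
  set rho : ℝ := 1 - 4 * condNumber A / (K * (condNumber A + 1) ^ 2) with hrho
  set rho0 : ℝ := 1 - 4 * a * bb / (a + bb) ^ 2 with hrho0
  have hρle : rho0 ≤ rho := by
    have h1 : 4 * condNumber A / (K * (condNumber A + 1) ^ 2)
        ≤ 4 * condNumber A / (1 * (condNumber A + 1) ^ 2) := by
      rw [div_le_div_iff_of_pos_left (by positivity) (by positivity) (by positivity)]
      nlinarith [hκpos, sq_nonneg (condNumber A + 1)]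
    have h2 : 4 * condNumber A / (1 * (condNumber A + 1) ^ 2) = 4 * a * bb / (a + bb) ^ 2 := by
      rw [one_mul, hcondA]
      rw [div_eq_div_iff (by positivity) (by positivity)]
      field_simp
      ring
    rw [hrho, hrho0]
    linarith [h2 ▸ h1]
  have hρ0nonneg : (0:ℝ) ≤ rho0 := by
    have h1 : 4 * a * bb ≤ (a + bb) ^ 2 := by nlinarith [sq_nonneg (a - bb)]
    have h2 : 4 * a * bb / (a + bb) ^ 2 ≤ 1 := by
      rw [div_le_one (by positivity)]; exact h1
    rw [hrho0]; linarith
  have hρnonneg : (0:ℝ) ≤ rho := le_trans hρ0nonneg hρle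
  have hρlt1 : rho < 1 := by
    have : 0 < 4 * condNumber A / (K * (condNumber A + 1) ^ 2) := by positivity
    rw [hrho]; linarith
  -- basic facts
  have hdet : IsUnit A.det := isUnit_iff_ne_zero.mpr (ne_of_gt hA.det_pos)
  have hAinv : A * A⁻¹ = 1 := A.mul_nonsing_inv hdet
  have hAinv' : A⁻¹ * A = 1 := A.nonsing_inv_mul hdet
  have hsymm : Aᵀ = A := transpose_of_hermitian hA.1
  have hAx : A *ᵥ xstar = b := by
    rw [hxstar, mulVec_mulVec, hAinv, one_mulVec]
  have hgx : ∀ k, A *ᵥ (x k - xstar) = g k := fun k => by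
    rw [mulVec_sub, hAx, hg]
  have hxg : ∀ k, x k - xstar = A⁻¹ *ᵥ g k := fun k => by
    rw [← hgx k, mulVec_mulVec, hAinv', one_mulVec]
  set F : ℕ → ℝ := fun k => (x k - xstar) ⬝ᵥ A.mulVec (x k - xstar) with hF
  have hFnonneg : ∀ k, 0 ≤ F k := fun k => sd_dot_nonneg hA _
  have hFfromg : ∀ k, F k = g k ⬝ᵥ A⁻¹.mulVec (g k) := by
    intro k
    rw [hF]
    show (x k - xstar) ⬝ᵥ A.mulVec (x k - xstar) = _
    rw [hgx k]
    conv_lhs => rw [hxg k]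
    rw [dotProduct_comm]
  have hgnz : ∀ k, g k ≠ 0 := by
    intro k hk0
    apply hnz k (Classical.arbitrary (Fin nh))
    rw [hk0]
    funext i
    simp [blockProj]
  -- per step descent
  have hstep : ∀ k, F (k + 1) ≤ rho0 * F k := by
    intro k
    set gg : Fin m → ℝ := g k with hgg
    set π : Fin nh → Fin m → ℝ := fun n => blockProj P n gg with hπ
    set B : (Fin nh → ℝ) → (Fin m → ℝ) := fun θ => ∑ n, θ n • π n with hB
    have s0 : ∑ n, π n = gg := by
      funext i
      rw [Finset.sum_apply]
      simp [hπ, blockProj]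
    have s1 : ∀ (θ : Fin nh → ℝ) (w : Fin m → ℝ), B θ ⬝ᵥ w = ∑ n, θ n * (π n ⬝ᵥ w) := by
      intro θ w
      rw [hB]
      simp only [sum_dot, smul_dotProduct, smul_eq_mul]
    have s2 : ∀ θ : Fin nh → ℝ, B θ ⬝ᵥ gg = θ ⬝ᵥ D k := by
      intro θ
      have hr : θ ⬝ᵥ D k = ∑ n, θ n * D k n := rfl
      rw [s1, hr]
      refine Finset.sum_congr rfl fun n _ => ?_
      rw [hD k n, dotProduct_comm]
    have hAB : ∀ θ : Fin nh → ℝ, A *ᵥ B θ = ∑ n, θ n • (A *ᵥ π n) := by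
      intro θ
      rw [hB, mulVec_sum']
      exact Finset.sum_congr rfl fun n _ => mulVec_smul A (θ n) (π n)
    have s3 : ∀ θ θ' : Fin nh → ℝ, B θ ⬝ᵥ A.mulVec (B θ') = θ ⬝ᵥ (H k).mulVec θ' := by
      intro θ θ'
      rw [hAB, dot_sum]
      have e1 : ∀ n', B θ ⬝ᵥ (θ' n' • (A *ᵥ π n')) = θ' n' * ∑ n, θ n * H k n n' := by
        intro n'
        rw [dotProduct_smul, smul_eq_mul, s1]
        congr 1
        exact Finset.sum_congr rfl fun n _ => by rw [hH k n n']
      rw [Finset.sum_congr rfl fun n' _ => e1 n']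
      simp only [dotProduct, mulVec, Finset.mul_sum]
      rw [Finset.sum_comm]
      all_goals exact Finset.sum_congr rfl fun n _ => Finset.sum_congr rfl fun n' _ => by ring
    have s4 : ∀ θ : Fin nh → ℝ,
        (x k + B θ - xstar) ⬝ᵥ A.mulVec (x k + B θ - xstar)
          = F k + 2 * (θ ⬝ᵥ D k) + θ ⬝ᵥ (H k).mulVec θ := by
      intro θ
      have he : x k + B θ - xstar = (x k - xstar) + B θ := by
        rw [add_sub_right_comm]
      rw [he, mulVec_add, add_dotProduct, dotProduct_add, dotProduct_add]
      have c1 : (x k - xstar) ⬝ᵥ A.mulVec (B θ) = θ ⬝ᵥ D k := by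
        rw [dot_mulVec_symm hsymm, hgx k, s2]
      have c2 : B θ ⬝ᵥ A.mulVec (x k - xstar) = θ ⬝ᵥ D k := by
        rw [hgx k, s2]
      rw [c1, c2, s3]
      show F k + θ ⬝ᵥ D k + (θ ⬝ᵥ D k + θ ⬝ᵥ (H k).mulVec θ) = _
      ring
    -- H k is positive definite
    have hHherm : (H k).IsHermitian := by
      ext n n'
      simp only [conjTranspose_apply, star_trivial]
      rw [hH k n n', hH k n' n]
      exact dot_mulVec_symm hsymm _ _
    have hBnz : ∀ v : Fin nh → ℝ, v ≠ 0 → B v ≠ 0 := by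
      intro v hv
      obtain ⟨n, hn⟩ := Function.ne_iff.mp hv
      obtain ⟨i, hi⟩ := Function.ne_iff.mp (hnz k n)
      have hi' : (if P i = n then gg i else 0) ≠ 0 := by
        simpa [blockProj] using hi
      have hPi : P i = n ∧ gg i ≠ 0 := by
        by_cases h : P i = n
        · exact ⟨h, by simpa [h] using hi'⟩
        · exfalso; apply hi'; simp [h]
      apply Function.ne_iff.mpr
      refine ⟨i, ?_⟩
      have hBvi : B v i = v (P i) * gg i := by
        show (∑ n' : Fin nh, v n' • π n') i = v (P i) * gg i
        rw [Finset.sum_apply]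
        simp [hπ, blockProj, mul_ite, Finset.sum_ite_eq]
      rw [hBvi, hPi.1]
      simp only [Pi.zero_apply]
      exact mul_ne_zero (by simpa using hn) hPi.2
    have hHpd : (H k).PosDef := by
      refine Matrix.PosDef.of_dotProduct_mulVec_pos hHherm fun v hv => ?_
      have h1 : v ⬝ᵥ (H k).mulVec v = B v ⬝ᵥ A.mulVec (B v) := (s3 v v).symm
      have h2 : 0 < B v ⬝ᵥ A.mulVec (B v) := sd_dot_pos hA (hBnz v hv)
      simpa [h1] using h2
    have hHdet : IsUnit (H k).det := isUnit_iff_ne_zero.mpr (ne_of_gt hHpd.det_pos)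
    have s6 : (H k).mulVec (Θ k) = -(D k) := by
      rw [hΘ k, mulVec_neg, mulVec_mulVec, (H k).mul_nonsing_inv hHdet, one_mulVec]
    have hHsymmT : (H k)ᵀ = H k := transpose_of_hermitian hHherm
    -- minimality of Θ k
    have s7 : ∀ θ : Fin nh → ℝ,
        F (k + 1) ≤ F k + 2 * (θ ⬝ᵥ D k) + θ ⬝ᵥ (H k).mulVec θ := by
      intro θ
      have hFk1 : F (k + 1) = F k + 2 * (Θ k ⬝ᵥ D k) + Θ k ⬝ᵥ (H k).mulVec (Θ k) := by
        rw [hF]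
        show (x (k+1) - xstar) ⬝ᵥ A.mulVec (x (k+1) - xstar) = _
        rw [hupd k]
        exact s4 (Θ k)
      have hnn : 0 ≤ (θ - Θ k) ⬝ᵥ (H k).mulVec (θ - Θ k) := sd_dot_nonneg hHpd _
      have hkey : (θ - Θ k) ⬝ᵥ (H k).mulVec (θ - Θ k)
          = (F k + 2 * (θ ⬝ᵥ D k) + θ ⬝ᵥ (H k).mulVec θ)
            - (F k + 2 * (Θ k ⬝ᵥ D k) + Θ k ⬝ᵥ (H k).mulVec (Θ k)) := by
        have hsw : Θ k ⬝ᵥ (H k).mulVec θ = θ ⬝ᵥ (H k).mulVec (Θ k) :=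
          dot_mulVec_symm hHsymmT (Θ k) θ
        simp only [mulVec_sub, sub_dotProduct, dotProduct_sub]
        rw [hsw, s6]
        simp only [dotProduct_neg]
        ring
      rw [hFk1]
      linarith [hkey ▸ hnn]
    -- sum identities
    have hBone : B (fun _ => (1:ℝ)) = gg := by
      show (∑ n : Fin nh, (1:ℝ) • π n) = gg
      simpa using s0
    have hDsum : ∑ n, D k n = gg ⬝ᵥ gg := by
      have h1 : (fun _ => (1:ℝ)) ⬝ᵥ D k = ∑ n, D k n := by
        simp [dotProduct]
      rw [← h1, ← s2 (fun _ => 1), hBone]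
    have hT : 0 < gg ⬝ᵥ A.mulVec gg := sd_dot_pos hA (hgnz k)
    set S : ℝ := gg ⬝ᵥ gg with hS
    set T : ℝ := gg ⬝ᵥ A.mulVec gg with hTT
    set α : ℝ := S / T with hα
    -- apply s7 with constant θ
    have hθc : F (k + 1) ≤ F k - S ^ 2 / T := by
      have h := s7 (fun _ => -α)
      have e1 : (fun _ => -α : Fin nh → ℝ) ⬝ᵥ D k = -α * S := by
        simp only [dotProduct]
        rw [← hDsum, Finset.mul_sum]
        all_goals exact Finset.sum_congr rfl fun n _ => by ring
      have e2 : (fun _ => -α : Fin nh → ℝ) ⬝ᵥ (H k).mulVec (fun _ => -α) = α ^ 2 * T := by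
        have hc : (fun _ => -α : Fin nh → ℝ) = (-α) • (fun _ => (1:ℝ)) := by
          funext n; simp
        rw [hc, smul_dotProduct, mulVec_smul, dotProduct_smul]
        have : (fun _ => (1:ℝ)) ⬝ᵥ (H k).mulVec (fun _ => (1:ℝ)) = T := by
          rw [← s3, hBone, hTT]
        rw [this]
        simp only [smul_eq_mul]
        ring
      rw [e1, e2] at h
      have hSnn : 0 ≤ S := Finset.sum_nonneg fun i _ => mul_self_nonneg _
      calc F (k + 1) ≤ F k + 2 * (-α * S) + α ^ 2 * T := h
        _ = F k - S ^ 2 / T := by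
            rw [hα]
            field_simp
            ring
    -- Kantorovich bound
    have hkant : 4 * a * bb / (a + bb) ^ 2 * F k ≤ S ^ 2 / T := by
      have hk0 := kantorovich_matrix hA a bb hapos haleb
        (fun i => (hbounds i).1) (fun i => (hbounds i).2) gg
      rw [← hS, ← hTT, ← hFfromg k] at hk0
      rw [div_mul_eq_mul_div, div_le_div_iff₀ (by positivity) hT]
      nlinarith [hk0]
    have hFk : F k = g k ⬝ᵥ A⁻¹.mulVec (g k) := hFfromg k
    calc F (k + 1) ≤ F k - S ^ 2 / T := hθc
      _ ≤ F k - 4 * a * bb / (a + bb) ^ 2 * F k := by linarith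
      _ = rho0 * F k := by rw [hrho0]; ring
  -- induction
  have hFbound : ∀ k, F k ≤ rho ^ k * F 0 := by
    intro k
    induction k with
    | zero => simp
    | succ k ih =>
      calc F (k + 1) ≤ rho0 * F k := hstep k
        _ ≤ rho * F k := mul_le_mul_of_nonneg_right hρle (hFnonneg k)
        _ ≤ rho * (rho ^ k * F 0) := mul_le_mul_of_nonneg_left ih hρnonneg
        _ = rho ^ (k + 1) * F 0 := by ring
  constructor
  · exact hFbound
  · -- convergence
    have hFtend : Filter.Tendsto (fun k => rho ^ k * F 0) Filter.atTop (nhds 0) := by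
      have h1 := (tendsto_pow_atTop_nhds_zero_of_lt_one hρnonneg hρlt1).mul_const (F 0)
      simpa using h1
    rw [tendsto_pi_nhds]
    intro i
    rw [← tendsto_sub_nhds_zero_iff]
    have hsqle : ∀ k, (x k i - xstar i) ^ 2 ≤ (rho ^ k * F 0) / a := by
      intro k
      have h1 : a * ((x k - xstar) ⬝ᵥ (x k - xstar)) ≤ F k :=
        quad_lower hA a (fun j => (hbounds j).1) _
      have h2 : (x k i - xstar i) ^ 2 ≤ (x k - xstar) ⬝ᵥ (x k - xstar) := by
        have h3 : (x k - xstar) i * (x k - xstar) i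
            ≤ ∑ j, (x k - xstar) j * (x k - xstar) j :=
          Finset.single_le_sum (f := fun j => (x k - xstar) j * (x k - xstar) j)
            (fun j _ => mul_self_nonneg _) (Finset.mem_univ i)
        simpa [dotProduct, pow_two] using h3
      have h4 : a * (x k i - xstar i) ^ 2 ≤ rho ^ k * F 0 := by
        calc a * (x k i - xstar i) ^ 2 ≤ a * ((x k - xstar) ⬝ᵥ (x k - xstar)) := by
              exact mul_le_mul_of_nonneg_left h2 (le_of_lt hapos)
          _ ≤ F k := h1
          _ ≤ rho ^ k * F 0 := hFbound k
      rw [le_div_iff₀ hapos]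
      linarith
    have hsqtend : Filter.Tendsto (fun k => (x k i - xstar i) ^ 2) Filter.atTop (nhds 0) := by
      apply squeeze_zero (fun k => sq_nonneg _) hsqle
      simpa using hFtend.div_const a
    have habs : Filter.Tendsto (fun k => |x k i - xstar i|) Filter.atTop (nhds 0) := by
      have h1 : Filter.Tendsto (fun k => Real.sqrt ((x k i - xstar i) ^ 2))
          Filter.atTop (nhds (Real.sqrt 0)) := (Real.continuous_sqrt.tendsto 0).comp hsqtend
      simpa [Real.sqrt_sq_eq_abs] using h1
    have hneg : Filter.Tendsto (fun k => -|x k i - xstar i|) Filter.atTop (nhds 0) := by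
      simpa using habs.neg
    exact tendsto_of_tendsto_of_tendsto_of_le_of_le hneg habs
      (fun k => neg_abs_le _) (fun k => le_abs_self _)
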